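/- Let P be a stochastic matrix of a finite irreducible Markov chain with P(x,x) > 0 for every state x. Then for every complex eigenvalue λ of P with |λ| = 1 one has λ = 1, and for any eigenvector f of an eigenvalue of modulus 1, |f| is constant. -/

import Mathlib

open Finset

/-- For an irreducible lazy stochastic matrix (P(x,x) > 0 for all x), every
complex eigenvalue of modulus 1 equals 1, and any eigenvector of an eigenvalue
of modulus 1 has constant absolute value. -/
theorem lazy_irreducible_peripheral_spectrum
    {V : Type*} [Fintype V] [DecidableEq V] [Nonempty V]
    (P : Matrix V V ℝ)
    (hnn : ∀ x y, 0 ≤ P x y) (hrow : ∀ x, ∑ y, P x y = 1)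
    (hirr : ∀ x y, ∃ n : ℕ, 0 < (P ^ n) x y)
    (hlazy : ∀ x, 0 < P x x)
    (lam : ℂ) (f : V → ℂ) (hf : f ≠ 0)
    (heig : ∀ x, ∑ y, (P x y : ℂ) * f y = lam * f x)
    (hmod : ‖lam‖ = 1) :
    lam = 1 ∧ ∀ x y, ‖f x‖ = ‖f y‖ := by
  classical
  obtain ⟨x0, -, hx0⟩ := Finset.exists_max_image (Finset.univ : Finset V)
    (fun x => ‖f x‖) ⟨Classical.arbitrary V, Finset.mem_univ _⟩
  obtain ⟨M, hM⟩ : ∃ M : ℝ, M = ‖f x0‖ := ⟨_, rfl⟩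
  have hgle : ∀ x, ‖f x‖ ≤ M := by
    intro x; rw [hM]; exact hx0 x (mem_univ x)
  have hgnn : ∀ x, (0:ℝ) ≤ ‖f x‖ := fun x => norm_nonneg _
  have hsumM : ∀ x, ∑ y, P x y * M = M := by
    intro x; rw [← Finset.sum_mul, hrow, one_mul]
  have hineq : ∀ x, ‖f x‖ ≤ ∑ y, P x y * ‖f y‖ := by
    intro x
    have h1 : ‖f x‖ = ‖lam * f x‖ := by
      rw [norm_mul, hmod, one_mul]
    rw [h1, ← heig x]
    calc ‖∑ y, (P x y : ℂ) * f y‖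
        ≤ ∑ y, ‖(P x y : ℂ) * f y‖ := norm_sum_le _ _
      _ = ∑ y, P x y * ‖f y‖ := by
          refine Finset.sum_congr rfl fun y _ => ?_
          rw [norm_mul, Complex.norm_real, Real.norm_eq_abs, abs_of_nonneg (hnn x y)]
  have hC : ∀ x, ‖f x‖ = M → ∀ y, 0 < P x y → ‖f y‖ = M := by
    intro x hx y hy
    have h0 : ∑ y, P x y * (M - ‖f y‖) = 0 := by
      have he : ∑ y, P x y * (M - ‖f y‖)
          = (∑ y, P x y * M) - ∑ y, P x y * ‖f y‖ := by
        rw [← Finset.sum_sub_distrib]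
        exact Finset.sum_congr rfl fun y _ => by ring
      have h2 := hineq x
      rw [hx] at h2
      have h3 : ∑ y, P x y * ‖f y‖ ≤ M := by
        calc ∑ y, P x y * ‖f y‖ ≤ ∑ y, P x y * M :=
              Finset.sum_le_sum fun y _ => mul_le_mul_of_nonneg_left (hgle y) (hnn x y)
          _ = M := hsumM x
      rw [he, hsumM x]; linarith
    have hterm := (Finset.sum_eq_zero_iff_of_nonneg
      (fun y _ => mul_nonneg (hnn x y) (by linarith [hgle y]))).mp h0 y (mem_univ y)
    rcases mul_eq_zero.mp hterm with h | h
    · exact absurd h (ne_of_gt hy)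
    · linarith
  have hPn : ∀ n : ℕ, ∀ x y : V, 0 ≤ (P ^ n) x y := by
    intro n
    induction n with
    | zero => intro x y; rw [pow_zero, Matrix.one_apply]; split <;> norm_num
    | succ n ih =>
      intro x y
      rw [pow_succ, Matrix.mul_apply]
      exact Finset.sum_nonneg fun z _ => mul_nonneg (ih x z) (hnn z y)
  have hD : ∀ n : ℕ, ∀ x y : V, ‖f x‖ = M → 0 < (P ^ n) x y →
      ‖f y‖ = M := by
    intro n
    induction n with
    | zero =>
      intro x y hx hp
      rw [pow_zero, Matrix.one_apply] at hp
      split at hp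
      · subst ‹x = y›; exact hx
      · exact absurd hp (by norm_num)
    | succ n ih =>
      intro x y hx hp
      rw [pow_succ, Matrix.mul_apply] at hp
      obtain ⟨z, -, hz⟩ := Finset.exists_lt_of_sum_lt (by simpa using hp :
        ∑ _z : V, (0:ℝ) < ∑ z, (P ^ n) x z * P z y)
      have hz1 : 0 < (P ^ n) x z := by
        rcases lt_or_eq_of_le (hPn n x z) with h | h
        · exact h
        · exfalso; rw [← h, zero_mul] at hz; exact lt_irrefl 0 hz
      have hz2 : 0 < P z y := by
        by_contra h
        have : P z y = 0 := le_antisymm (not_lt.mp h) (hnn z y)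
        rw [this, mul_zero] at hz; exact lt_irrefl 0 hz
      exact hC z (ih x z hx hz1) y hz2
  have hall : ∀ y, ‖f y‖ = M := by
    intro y
    obtain ⟨n, hn⟩ := hirr x0 y
    exact hD n x0 y hM.symm hn
  have hMpos : 0 < M := by
    rcases lt_or_eq_of_le (hM ▸ hgnn x0) with h | h
    · exact h
    · exfalso
      apply hf
      funext x
      have hx := hall x
      rw [← h] at hx
      exact norm_eq_zero.mp hx
  -- core equality analysis at x0
  have hwabs : ‖lam * f x0‖ = M := by
    rw [norm_mul, hmod, one_mul, hM]
  set u : ℂ := starRingEnd ℂ (lam * f x0) with hu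
  have huw : u * (lam * f x0) = ((M ^ 2 : ℝ) : ℂ) := by
    rw [hu, mul_comm, Complex.mul_conj, Complex.normSq_eq_norm_sq, hwabs]
  have hre_sum : ∑ y, P x0 y * (u * f y).re = M ^ 2 := by
    have h1 : u * (lam * f x0) = ∑ y, ((P x0 y : ℂ) * (u * f y)) := by
      rw [← heig x0, Finset.mul_sum]
      exact Finset.sum_congr rfl fun y _ => by ring
    have h2 := congrArg Complex.re h1
    rw [huw] at h2
    simp only [Complex.ofReal_re, Complex.re_sum] at h2
    rw [h2]
    exact Finset.sum_congr rfl fun y _ => (Complex.re_ofReal_mul _ _).symm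
  have habs_uf : ∀ y, ‖u * f y‖ = M ^ 2 := by
    intro y
    rw [norm_mul, hu, Complex.norm_conj, hwabs, hall y]
    ring
  have hre_le : ∀ y, (u * f y).re ≤ M ^ 2 := fun y =>
    (Complex.re_le_norm _).trans (le_of_eq (habs_uf y))
  have hzero : ∑ y, P x0 y * (M ^ 2 - (u * f y).re) = 0 := by
    have he : ∑ y, P x0 y * (M ^ 2 - (u * f y).re)
        = (∑ y, P x0 y * M ^ 2) - ∑ y, P x0 y * (u * f y).re := by
      rw [← Finset.sum_sub_distrib]
      exact Finset.sum_congr rfl fun y _ => by ring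
    have hs : ∑ y, P x0 y * M ^ 2 = M ^ 2 := by
      rw [← Finset.sum_mul, hrow, one_mul]
    rw [he, hs, hre_sum, sub_self]
  have hterm := (Finset.sum_eq_zero_iff_of_nonneg
    (fun y _ => mul_nonneg (hnn x0 y) (by linarith [hre_le y]))).mp hzero x0 (mem_univ x0)
  have hre_x0 : (u * f x0).re = M ^ 2 := by
    rcases mul_eq_zero.mp hterm with h | h
    · exact absurd h (ne_of_gt (hlazy x0))
    · linarith
  have him_x0 : (u * f x0).im = 0 := by
    have h1 := habs_uf x0
    have h2 : ‖u * f x0‖ ^ 2 = Complex.normSq (u * f x0) := Complex.sq_norm _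
    rw [h1, Complex.normSq_apply, hre_x0] at h2
    nlinarith [sq_nonneg ((u * f x0).im)]
  have hufx0 : u * f x0 = ((M ^ 2 : ℝ) : ℂ) := by
    rw [Complex.ext_iff, Complex.ofReal_re, Complex.ofReal_im]
    exact ⟨hre_x0, him_x0⟩
  have hM2ne : ((M ^ 2 : ℝ) : ℂ) ≠ 0 := by
    simp only [ne_eq, Complex.ofReal_eq_zero]
    positivity
  have hlam1 : lam = 1 := by
    have h1 : lam * ((M ^ 2 : ℝ) : ℂ) = 1 * ((M ^ 2 : ℝ) : ℂ) := by
      calc lam * ((M ^ 2 : ℝ) : ℂ) = lam * (u * f x0) := by rw [hufx0]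
        _ = u * (lam * f x0) := by ring
        _ = ((M ^ 2 : ℝ) : ℂ) := huw
        _ = 1 * ((M ^ 2 : ℝ) : ℂ) := (one_mul _).symm
    exact mul_right_cancel₀ hM2ne h1
  exact ⟨hlam1, fun x y => by rw [hall x, hall y]⟩
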